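/- Let α₁, β₁, α₂, β₂ ∈ ℂ with |α₁|²+|β₁|² = 1, α₁ ≠ 0, and set dα = α₂ − α₁, dβ = β₂ − β₁. Assume the orthogonality relation conj(α₁)dα + conj(β₁)dβ = 0, dβ ≠ 0, and α₁β₂ − α₂β₁ ≠ 0. Then (α₁ − α₂)/(α₁β₂ − α₂β₁) = conj(β₁) and (β₁ − β₂)/(α₁β₂ − α₂β₁) = −conj(α₁). -/

import Mathlib

theorem stmt_16 (a1 b1 a2 b2 : ℂ)
    (h1 : ‖a1‖ ^ 2 + ‖b1‖ ^ 2 = 1) (ha1 : a1 ≠ 0)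
    (horth : (starRingEnd ℂ) a1 * (a2 - a1) + (starRingEnd ℂ) b1 * (b2 - b1) = 0)
    (hdb : b2 - b1 ≠ 0) (hden : a1 * b2 - a2 * b1 ≠ 0) :
    (a1 - a2) / (a1 * b2 - a2 * b1) = (starRingEnd ℂ) b1 ∧
    (b1 - b2) / (a1 * b2 - a2 * b1) = -(starRingEnd ℂ) a1 := by
  have h1' : (starRingEnd ℂ) a1 * a1 + (starRingEnd ℂ) b1 * b1 = 1 := by
    have hr : Complex.normSq a1 + Complex.normSq b1 = 1 := by
      rw [← Complex.sq_norm, ← Complex.sq_norm]; exact h1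
    have h2 : (Complex.normSq a1 : ℂ) + (Complex.normSq b1 : ℂ) = 1 := by
      exact_mod_cast hr
    linear_combination h2 + Complex.mul_conj a1 + Complex.mul_conj b1
  constructor
  · rw [div_eq_iff hden]
    linear_combination (a2 - a1) * h1' - a1 * horth
  · rw [div_eq_iff hden]
    linear_combination (b2 - b1) * h1' - b1 * horth
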